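/- Let A and B be real d×d matrices. Suppose A is symmetric positive definite and the product AB is skew-symmetric. Then every eigenvalue of A + B has positive real part; in particular, A + B is invertible. -/

import Mathlib

open Matrix Finset

lemma quad_re (d : ℕ) (M : Matrix (Fin d) (Fin d) ℝ) (v : Fin d → ℂ) :
    (star v ⬝ᵥ (M.map (Complex.ofReal)).mulVec v).re
      = (fun i => (v i).re) ⬝ᵥ M.mulVec (fun i => (v i).re)
        + (fun i => (v i).im) ⬝ᵥ M.mulVec (fun i => (v i).im) := by
  simp only [dotProduct, mulVec, Pi.star_apply, Matrix.map_apply, Finset.mul_sum,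
    Complex.re_sum, Complex.mul_re, Complex.mul_im, Complex.ofReal_re, Complex.ofReal_im,
    RCLike.star_def, Complex.conj_re, Complex.conj_im, Finset.sum_add_distrib]
  rw [← Finset.sum_add_distrib]
  refine Finset.sum_congr rfl fun i _ => ?_
  rw [← Finset.sum_add_distrib]
  refine Finset.sum_congr rfl fun j _ => ?_
  ring

lemma quad_im (d : ℕ) (M : Matrix (Fin d) (Fin d) ℝ) (v : Fin d → ℂ) :
    (star v ⬝ᵥ (M.map (Complex.ofReal)).mulVec v).im
      = (fun i => (v i).re) ⬝ᵥ M.mulVec (fun i => (v i).im)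
        - (fun i => (v i).im) ⬝ᵥ M.mulVec (fun i => (v i).re) := by
  simp only [dotProduct, mulVec, Pi.star_apply, Matrix.map_apply, Finset.mul_sum,
    Complex.im_sum, Complex.mul_im, Complex.mul_re, Complex.ofReal_re, Complex.ofReal_im,
    RCLike.star_def, Complex.conj_re, Complex.conj_im, Finset.sum_sub_distrib]
  rw [← Finset.sum_sub_distrib]
  refine Finset.sum_congr rfl fun i _ => ?_
  rw [← Finset.sum_sub_distrib]
  refine Finset.sum_congr rfl fun j _ => ?_
  ring

lemma dp_self_nonneg (d : ℕ) (x : Fin d → ℝ) : 0 ≤ x ⬝ᵥ x :=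
  Finset.sum_nonneg fun i _ => mul_self_nonneg (x i)

lemma sym_quad (d : ℕ) (M : Matrix (Fin d) (Fin d) ℝ) (hM : Mᵀ = M) (x y : Fin d → ℝ) :
    x ⬝ᵥ M.mulVec y = y ⬝ᵥ M.mulVec x := by
  rw [dotProduct_mulVec, ← vecMul_transpose, hM, dotProduct_comm]

lemma skew_quad (d : ℕ) (S : Matrix (Fin d) (Fin d) ℝ) (hS : Sᵀ = -S) (x : Fin d → ℝ) :
    x ⬝ᵥ S.mulVec x = 0 := by
  have h : x ⬝ᵥ S.mulVec x = -(x ⬝ᵥ S.mulVec x) := by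
    conv_lhs => rw [dotProduct_mulVec, ← mulVec_transpose, hS, neg_mulVec]
    simp [dotProduct_comm]
  linarith

theorem stmt_0 (d : ℕ) (A B : Matrix (Fin d) (Fin d) ℝ)
    (hA : A.PosDef) (hAB : (A * B)ᵀ = -(A * B)) :
    (∀ (μ : ℂ) (v : Fin d → ℂ), v ≠ 0 →
      ((A + B).map (Complex.ofReal)).mulVec v = μ • v → 0 < μ.re) ∧
    IsUnit (A + B).det := by
  have hAsym : Aᵀ = A := hA.1
  have hAx : ∀ x : Fin d → ℝ, x ≠ 0 → 0 < x ⬝ᵥ A.mulVec x := fun x hx => by simpa using hA.dotProduct_mulVec_pos hx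
  have hAker : ∀ x : Fin d → ℝ, A.mulVec x = 0 → x = 0 := by
    intro x hx
    by_contra h
    have := hAx x h
    rw [hx] at this
    simp at this
  have key : ∀ (μ : ℂ) (v : Fin d → ℂ), v ≠ 0 →
      ((A + B).map (Complex.ofReal)).mulVec v = μ • v → 0 < μ.re := by
    intro μ v hv heig
    set a : Fin d → ℝ := fun i => (v i).re with ha
    set b : Fin d → ℝ := fun i => (v i).im with hb
    -- the main complex identity
    have hmain : star v ⬝ᵥ ((A * A + A * B).map (Complex.ofReal)).mulVec v
        = μ * (star v ⬝ᵥ (A.map (Complex.ofReal)).mulVec v) := by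
      have h1 : ((A * A + A * B).map (Complex.ofReal)).mulVec v
          = (A.map (Complex.ofReal)).mulVec (((A + B).map (Complex.ofReal)).mulVec v) := by
        have hco : (Complex.ofReal : ℝ → ℂ) = ⇑Complex.ofRealHom := rfl
        rw [hco, mulVec_mulVec, ← Matrix.map_mul, mul_add]
      rw [h1, heig, mulVec_smul, dotProduct_smul, smul_eq_mul]
    -- real part of RHS
    have hcre : (star v ⬝ᵥ (A.map (Complex.ofReal)).mulVec v).re
        = a ⬝ᵥ A.mulVec a + b ⬝ᵥ A.mulVec b := quad_re d A v
    have hcim : (star v ⬝ᵥ (A.map (Complex.ofReal)).mulVec v).im = 0 := by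
      rw [quad_im d A v, sym_quad d A hAsym a b]
      ring
    -- real part of LHS
    have hlre : (star v ⬝ᵥ ((A * A + A * B).map (Complex.ofReal)).mulVec v).re
        = a ⬝ᵥ (A * A).mulVec a + b ⬝ᵥ (A * A).mulVec b := by
      rw [quad_re d (A * A + A * B) v]
      simp only [add_mulVec, dotProduct_add]
      rw [skew_quad d (A * B) hAB a, skew_quad d (A * B) hAB b]
      ring
    -- positivity of LHS
    have hquad : ∀ x : Fin d → ℝ, x ⬝ᵥ (A * A).mulVec x = (A.mulVec x) ⬝ᵥ (A.mulVec x) := by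
      intro x
      rw [← mulVec_mulVec, dotProduct_mulVec, ← vecMul_transpose, hAsym]
    have hab : a ≠ 0 ∨ b ≠ 0 := by
      by_contra h
      push_neg at h
      apply hv
      funext i
      have h1 := congrFun h.1 i
      have h2 := congrFun h.2 i
      simp only [ha, hb, Pi.zero_apply] at h1 h2
      exact Complex.ext h1 h2
    have hlpos : 0 < a ⬝ᵥ (A * A).mulVec a + b ⬝ᵥ (A * A).mulVec b := by
      rw [hquad a, hquad b]
      rcases hab with h | h
      · have hane : A.mulVec a ≠ 0 := fun hc => h (hAker a hc)
        have := dp_self_nonneg d (A.mulVec b)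
        have h2 : 0 < A.mulVec a ⬝ᵥ A.mulVec a :=
          lt_of_le_of_ne (dp_self_nonneg d _) (fun hc =>
            hane ((dotProduct_self_eq_zero).mp hc.symm))
        linarith
      · have hbne : A.mulVec b ≠ 0 := fun hc => h (hAker b hc)
        have := dp_self_nonneg d (A.mulVec a)
        have h2 : 0 < A.mulVec b ⬝ᵥ A.mulVec b :=
          lt_of_le_of_ne (dp_self_nonneg d _) (fun hc =>
            hbne ((dotProduct_self_eq_zero).mp hc.symm))
        linarith
    have hcpos : 0 < a ⬝ᵥ A.mulVec a + b ⬝ᵥ A.mulVec b := by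
      rcases hab with h | h
      · have := hAx a h
        rcases eq_or_ne b 0 with hb0 | hb0
        · rw [hb0]; simpa using this
        · have := hAx b hb0; linarith
      · have := hAx b h
        rcases eq_or_ne a 0 with ha0 | ha0
        · rw [ha0]; simpa using hAx b h
        · have := hAx a ha0; linarith
    -- take real parts of hmain
    have hre := congrArg Complex.re hmain
    rw [hlre, Complex.mul_re, hcre, hcim] at hre
    nlinarith
  refine ⟨key, ?_⟩
  by_contra h
  have hdet : (A + B).det = 0 := by
    simpa [isUnit_iff_ne_zero] using h
  obtain ⟨v, hv, hv0⟩ := (Matrix.exists_mulVec_eq_zero_iff).mpr hdet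
  have := key 0 (fun i => (v i : ℂ)) ?_ ?_
  · simp at this
  · intro hc
    apply hv
    funext i
    have := congrFun hc i
    simpa using this
  · have hmv : ((A + B).map (Complex.ofReal)).mulVec (fun i => (v i : ℂ))
        = fun i => ((A + B).mulVec v i : ℂ) := by
      funext i
      exact (RingHom.map_mulVec (Complex.ofRealHom) (A + B) v i).symm
    rw [hmv]
    funext i
    rw [hv0]
    simp
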